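/- Let M₈ be the 8×8 matrix above, and define φ : Z^8 → Z^{11} on the standard basis v₁,…,v₈ by φ(v₁) = −e₁−e₂−e₃−e₄, φ(v₂) = e₂−e₇, φ(v₃) = e₂+e₇, φ(v₄) = e₃−e₈, φ(v₅) = e₃+e₈, φ(v₆) = e₄−e₉, φ(v₇) = e₄+e₉, φ(v₈) = e₁+e₁₀+e₁₁, where e₁,…,e₁₁ is the standard basis of Z^{11}. Then for all x, y ∈ Z^8, ⟨φ(x), φ(y)⟩ = x^T M₈ y, where ⟨·,·⟩ is the negative definite standard form on Z^{11} given by ⟨eᵢ, eⱼ⟩ = −δᵢⱼ. In particular φ is an isometric embedding of the lattice (Z^8, M₈) into the diagonal lattice (Z^{11}, −Id). -/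
import Mathlib


open Matrix

def w8 : Fin 8 → ℤ := ![-4, -2, -2, -2, -2, -2, -2, -3]

def M8 : Matrix (Fin 8) (Fin 8) ℤ :=
  Matrix.of fun i j => if i = j then w8 i else if i = 0 ∨ j = 0 then 1 else 0

/-- The images φ(v₁),…,φ(v₈) in ℤ¹¹, written as rows. -/
def B8 : Matrix (Fin 8) (Fin 11) ℤ :=
  !![-1, -1, -1, -1, 0, 0, 0, 0, 0, 0, 0;
     0, 1, 0, 0, 0, 0, -1, 0, 0, 0, 0;
     0, 1, 0, 0, 0, 0, 1, 0, 0, 0, 0;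
     0, 0, 1, 0, 0, 0, 0, -1, 0, 0, 0;
     0, 0, 1, 0, 0, 0, 0, 1, 0, 0, 0;
     0, 0, 0, 1, 0, 0, 0, 0, -1, 0, 0;
     0, 0, 0, 1, 0, 0, 0, 0, 1, 0, 0;
     1, 0, 0, 0, 0, 0, 0, 0, 0, 1, 1]

/-- The linear map φ : ℤ⁸ → ℤ¹¹ sending vᵢ to the i-th row of `B8`. -/
def phi8 (x : Fin 8 → ℤ) : Fin 11 → ℤ := B8ᵀ.mulVec x

lemma key8 : -(B8 * B8ᵀ) = M8 := by decide

/-- φ is an isometric embedding of (ℤ⁸, M₈) into the negative definite diagonal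
lattice (ℤ¹¹, −Id): for all x, y, ⟨φ(x), φ(y)⟩ = xᵀ M₈ y, where ⟨a,b⟩ = −∑ aᵢbᵢ. -/
theorem stmt_6 :
    ∀ x y : Fin 8 → ℤ, -(phi8 x ⬝ᵥ phi8 y) = x ⬝ᵥ M8.mulVec y := by
  intro x y
  rw [← key8, phi8, phi8, Matrix.neg_mulVec, dotProduct_neg, neg_inj,
    ← Matrix.mulVec_mulVec, dotProduct_mulVec x]
  conv_rhs => rw [← transpose_transpose B8, vecMul_transpose]
  rw [transpose_transpose]
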